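/- Let (X_t) be a random process over the reals, let x_min > 0, and let T = inf{t : X_t ≤ x_min}. Suppose (a) X_t ≥ x_min for all t ≤ T, and (b) there is δ > 0 such that X_t − E[X_{t+1} | X_0,…,X_t] ≥ δ·X_t for all t < T. Then E[T | X_0] ≤ ln(X_0/x_min)/δ. -/

import Mathlib

open MeasureTheory ProbabilityTheory Filter
open scoped ENNReal NNReal

/-- The natural filtration of the process `X` up to time `t`:
the σ-algebra generated by `X 0, …, X t`. -/
noncomputable def natSigma {Ω : Type*} [MeasurableSpace Ω] (X : ℕ → Ω → ℝ) (t : ℕ) :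
    MeasurableSpace Ω :=
  ⨆ s ∈ Finset.range (t + 1), MeasurableSpace.comap (X s) inferInstance

section Aux

variable {Ω : Type*} [mΩ : MeasurableSpace Ω]

/-- The event that the process is still strictly above `xmin` at all times up to `t`,
i.e. `T > t`. -/
def aliveSet (X : ℕ → Ω → ℝ) (xmin : ℝ) (t : ℕ) : Set Ω := {ω | ∀ s ≤ t, xmin < X s ω}

open Classical in
/-- The process stopped at the hitting time of `(-∞, xmin]`. -/
noncomputable def stopX (X : ℕ → Ω → ℝ) (xmin : ℝ) : ℕ → Ω → ℝ
  | 0 => X 0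
  | t + 1 => (aliveSet X xmin t).piecewise (X (t + 1)) (stopX X xmin t)

variable {X : ℕ → Ω → ℝ} {xmin : ℝ}

lemma comap_le_natSigma {s t : ℕ} (hst : s ≤ t) :
    MeasurableSpace.comap (X s) inferInstance ≤ natSigma X t := by
  refine le_iSup₂ (f := fun s _ => MeasurableSpace.comap (X s) inferInstance) s ?_
  exact Finset.mem_range.2 (Nat.lt_succ_of_le hst)

lemma natSigma_le (hX : ∀ t, Measurable (X t)) (t : ℕ) : natSigma X t ≤ mΩ :=
  iSup₂_le fun s _ => (hX s).comap_le

lemma natSigma_mono {t u : ℕ} (h : t ≤ u) : natSigma X t ≤ natSigma X u :=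
  iSup₂_le fun s hs => comap_le_natSigma (Nat.le_of_lt_succ (Finset.mem_range.1 hs) |>.trans h)

lemma measurable_natSigma {s t : ℕ} (hst : s ≤ t) : Measurable[natSigma X t] (X s) :=
  measurable_iff_comap_le.2 (comap_le_natSigma hst)

lemma aliveSet_antitone {t : ℕ} : aliveSet X xmin (t + 1) ⊆ aliveSet X xmin t :=
  fun ω hω s hs => hω s (hs.trans (Nat.le_succ t))

lemma measurableSet_aliveSet {t : ℕ} : MeasurableSet[natSigma X t] (aliveSet X xmin t) := by
  have : aliveSet X xmin t = ⋂ s ∈ Finset.range (t + 1), X s ⁻¹' Set.Ioi xmin := by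
    ext ω
    simp only [aliveSet, Set.mem_setOf_eq, Set.mem_iInter, Finset.mem_range, Set.mem_preimage,
      Set.mem_Ioi, Nat.lt_succ_iff]
  rw [this]
  exact MeasurableSet.biInter (Finset.range (t + 1)).countable_toSet fun s hs =>
    measurable_natSigma (Nat.le_of_lt_succ (Finset.mem_range.1 hs)) measurableSet_Ioi

lemma stopX_eq_of_mem {t : ℕ} {ω : Ω} (hω : ω ∈ aliveSet X xmin t) :
    stopX X xmin t ω = X t ω := by
  classical
  cases t with
  | zero => rfl
  | succ s =>
    rw [stopX]
    exact Set.piecewise_eq_of_mem _ _ _ (aliveSet_antitone hω)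

lemma measurable_stopX (t : ℕ) : Measurable[natSigma X t] (stopX X xmin t) := by
  classical
  induction t with
  | zero =>
    rw [stopX]
    exact measurable_natSigma le_rfl
  | succ t ih =>
    rw [stopX]
    have h1 : Measurable[natSigma X (t + 1)] (X (t + 1)) := measurable_natSigma le_rfl
    have h2 : Measurable[natSigma X (t + 1)] (stopX X xmin t) :=
      ih.mono (natSigma_mono (Nat.le_succ t)) le_rfl
    have h3 : MeasurableSet[natSigma X (t + 1)] (aliveSet X xmin t) :=
      (natSigma_mono (Nat.le_succ t)) _ measurableSet_aliveSet
    exact h1.piecewise h3 h2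

end Aux

/-- Relation between the hitting time and the alive set. -/
lemma lt_hitting_iff {Ω : Type*} {X : ℕ → Ω → ℝ} {xmin : ℝ} {T : Ω → ℕ∞}
    (hT : ∀ ω, T ω = sInf ((fun n : ℕ => (n : ℕ∞)) '' {t : ℕ | X t ω ≤ xmin}))
    (t : ℕ) (ω : Ω) : (t : ℕ∞) < T ω ↔ ∀ s ≤ t, xmin < X s ω := by
  rw [hT]
  constructor
  · intro h s hst
    by_contra hc
    push_neg at hc
    have hle : sInf ((fun n : ℕ => (n : ℕ∞)) '' {t : ℕ | X t ω ≤ xmin}) ≤ (s : ℕ∞) :=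
      sInf_le ⟨s, hc, rfl⟩
    exact absurd ((hle.trans_lt' h)) (by exact_mod_cast Nat.not_lt.2 hst)
  · intro h
    have h1 : ((t + 1 : ℕ) : ℕ∞) ≤ sInf ((fun n : ℕ => (n : ℕ∞)) '' {t : ℕ | X t ω ≤ xmin}) := by
      refine le_sInf ?_
      rintro _ ⟨s, hs, rfl⟩
      have hts : t + 1 ≤ s := by
        by_contra hc
        exact absurd hs (not_le.2 (h s (Nat.lt_succ_iff.1 (Nat.lt_of_not_le hc))))
      show ((t + 1 : ℕ) : ℕ∞) ≤ (s : ℕ∞)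
      exact_mod_cast hts
    exact lt_of_lt_of_le (by exact_mod_cast Nat.lt_succ_self t) h1

section Aux2

variable {Ω : Type*} [mΩ : MeasurableSpace Ω] {μ : Measure Ω} {X : ℕ → Ω → ℝ} {xmin : ℝ}
  {T : Ω → ℕ∞}

lemma integrable_stopX (hX : ∀ t, Measurable (X t)) (hXint : ∀ t, Integrable (X t) μ) (t : ℕ) :
    Integrable (stopX X xmin t) μ := by
  classical
  induction t with
  | zero => rw [stopX]; exact hXint 0
  | succ t ih =>
    rw [stopX]
    exact MeasureTheory.Integrable.piecewise (natSigma_le hX t _ measurableSet_aliveSet)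
      (hXint (t + 1)).integrableOn ih.integrableOn

lemma stopX_ae_ge
    (hT : ∀ ω, T ω = sInf ((fun n : ℕ => (n : ℕ∞)) '' {t : ℕ | X t ω ≤ xmin}))
    (hnonneg : ∀ t : ℕ, ∀ᵐ ω ∂μ, (t : ℕ∞) ≤ T ω → xmin ≤ X t ω) (t : ℕ) :
    ∀ᵐ ω ∂μ, xmin ≤ stopX X xmin t ω := by
  classical
  induction t with
  | zero =>
    filter_upwards [hnonneg 0] with ω h
    rw [stopX]
    exact h zero_le
  | succ t ih =>
    filter_upwards [ih, hnonneg (t + 1)] with ω h1 h2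
    rw [stopX]
    by_cases hω : ω ∈ aliveSet X xmin t
    · rw [Set.piecewise_eq_of_mem _ _ _ hω]
      refine h2 ?_
      have hlt : (t : ℕ∞) < T ω := (lt_hitting_iff hT t ω).2 hω
      push_cast
      exact Order.add_one_le_of_lt hlt
    · rw [Set.piecewise_eq_of_notMem _ _ _ hω]
      exact h1

omit mΩ in
lemma coe_hitting_eq_tsum
    (hT : ∀ ω, T ω = sInf ((fun n : ℕ => (n : ℕ∞)) '' {t : ℕ | X t ω ≤ xmin})) (ω : Ω) :
    ((T ω : ℕ∞) : ℝ≥0∞)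
      = ∑' t : ℕ, Set.indicator (aliveSet X xmin t) (fun _ => (1 : ℝ≥0∞)) ω := by
  classical
  have hcong : ∀ t : ℕ, Set.indicator (aliveSet X xmin t) (fun _ => (1 : ℝ≥0∞)) ω
      = if (t : ℕ∞) < T ω then 1 else 0 := by
    intro t
    by_cases h : ω ∈ aliveSet X xmin t
    · rw [Set.indicator_of_mem h, if_pos ((lt_hitting_iff hT t ω).2 h)]
    · rw [Set.indicator_of_notMem h,
        if_neg (fun hc => h ((lt_hitting_iff hT t ω).1 hc))]
  rw [tsum_congr hcong]
  cases hTval : T ω using ENat.recTopCoe with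
  | top =>
    rw [ENat.toENNReal_top]
    have : ∀ t : ℕ, (if ((t : ℕ∞)) < (⊤ : ℕ∞) then (1 : ℝ≥0∞) else 0) = 1 := fun t =>
      if_pos (lt_of_le_of_ne le_top (by simp))
    rw [tsum_congr this]
    exact (ENNReal.tsum_const_eq_top_of_ne_zero one_ne_zero).symm
  | coe n =>
    rw [ENat.toENNReal_coe]
    rw [tsum_eq_sum (s := Finset.range n) (fun t ht => by
      rw [if_neg]
      exact fun hc => ht (Finset.mem_range.2 (by exact_mod_cast hc)))]
    rw [Finset.sum_congr rfl (fun t ht => if_pos (by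
      exact_mod_cast Finset.mem_range.1 ht))]
    simp

end Aux2

/-- The σ-algebra generated by `X 0`. -/
abbrev sigma0 {Ω : Type*} (X : ℕ → Ω → ℝ) : MeasurableSpace Ω :=
  MeasurableSpace.comap (X 0) inferInstance

/-- **Upper Multiplicative Drift, Unbounded, Hitting Target.** -/
theorem upper_multiplicative_drift_unbounded_hitting_target
    {Ω : Type*} [MeasurableSpace Ω] [StandardBorelSpace Ω]
    (μ : Measure Ω) [IsProbabilityMeasure μ]
    (X : ℕ → Ω → ℝ) (hXmeas : ∀ t, Measurable (X t)) (hXint : ∀ t, Integrable (X t) μ)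
    (xmin : ℝ) (hxmin : 0 < xmin)
    (T : Ω → ℕ∞)
    (hT : ∀ ω, T ω = sInf ((fun n : ℕ => (n : ℕ∞)) '' {t : ℕ | X t ω ≤ xmin}))
    (δ : ℝ) (hδ : 0 < δ)
    (hnonneg : ∀ t : ℕ, ∀ᵐ ω ∂μ, (t : ℕ∞) ≤ T ω → xmin ≤ X t ω)
    (hdrift : ∀ t : ℕ, ∀ᵐ ω ∂μ, (t : ℕ∞) < T ω →
      δ * X t ω ≤ X t ω - (μ[X (t + 1) | natSigma X t]) ω) :
    ∀ᵐ ω ∂μ,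
      (∫⁻ ω', (T ω' : ℝ≥0∞) ∂(condExpKernel μ (MeasurableSpace.comap (X 0) inferInstance) ω))
        ≤ ENNReal.ofReal (Real.log (X 0 ω / xmin) / δ) := by
  classical
  have hm0 : sigma0 X ≤ ‹MeasurableSpace Ω› := (hXmeas 0).comap_le
  have hm0F : ∀ t, sigma0 X ≤ natSigma X t := fun t => comap_le_natSigma (Nat.zero_le t)
  have hFle : ∀ t, natSigma X t ≤ ‹MeasurableSpace Ω› := natSigma_le hXmeas
  set A : ℕ → Set Ω := aliveSet X xmin with hA
  have hAmeas : ∀ t, MeasurableSet (A t) := fun t => hFle t _ measurableSet_aliveSet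
  set Y : ℕ → Ω → ℝ := fun t ω => Real.log (stopX X xmin t ω / xmin) with hY
  have hstopmeas : ∀ t, Measurable (stopX X xmin t) := fun t =>
    (measurable_stopX t).mono (hFle t) le_rfl
  have hstopge : ∀ t, ∀ᵐ ω ∂μ, xmin ≤ stopX X xmin t ω := stopX_ae_ge hT hnonneg
  have hYm : ∀ t, Measurable (Y t) := fun t =>
    Real.measurable_log.comp ((hstopmeas t).div_const xmin)
  have hYsm : ∀ t, StronglyMeasurable[natSigma X t] (Y t) := fun t =>
    (Real.measurable_log.comp ((measurable_stopX t).div_const xmin)).stronglyMeasurable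
  have hYint : ∀ t, Integrable (Y t) μ := by
    intro t
    refine Integrable.mono' ((integrable_stopX (xmin := xmin) hXmeas hXint t).div_const xmin)
      (hYm t).aestronglyMeasurable ?_
    filter_upwards [hstopge t] with ω hω
    have h1 : (1 : ℝ) ≤ stopX X xmin t ω / xmin := (one_le_div hxmin).2 hω
    have h2 : 0 ≤ Real.log (stopX X xmin t ω / xmin) := Real.log_nonneg h1
    have h3 : Real.log (stopX X xmin t ω / xmin) ≤ stopX X xmin t ω / xmin - 1 :=
      Real.log_le_sub_one_of_pos (by linarith)
    rw [Real.norm_eq_abs, abs_of_nonneg h2]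
    linarith
  have hYnn : ∀ t, 0 ≤ᵐ[μ] Y t := by
    intro t
    filter_upwards [hstopge t] with ω hω
    exact Real.log_nonneg ((one_le_div hxmin).2 hω)
  have hIndInt : ∀ t, Integrable (Set.indicator (A t) fun _ => (1 : ℝ)) μ := fun t =>
    (integrable_const 1).indicator (hAmeas t)
  have hstep : ∀ t : ℕ, ∀ᵐ ω ∂μ, (μ[Y (t + 1)|natSigma X t]) ω
      ≤ Y t ω - δ * Set.indicator (A t) (fun _ => (1 : ℝ)) ω := by
    intro t
    set g : Ω → ℝ := Set.indicator (A t) (fun ω => (X t ω)⁻¹) with hg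
    have hgsm : StronglyMeasurable[natSigma X t] g :=
      (((measurable_natSigma (le_rfl)).inv).indicator measurableSet_aliveSet).stronglyMeasurable
    have hgbd : ∀ ω, ‖g ω‖ ≤ xmin⁻¹ := by
      intro ω
      by_cases hω : ω ∈ A t
      · rw [hg, Set.indicator_of_mem hω]
        have hx : xmin < X t ω := hω t le_rfl
        rw [Real.norm_eq_abs, abs_of_nonneg (inv_nonneg.2 (hxmin.trans hx).le)]
        exact inv_anti₀ hxmin hx.le
      · rw [hg, Set.indicator_of_notMem hω]
        simp [inv_nonneg.2 hxmin.le]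
    have hgX : Integrable (g * X (t + 1)) μ :=
      (hXint (t + 1)).bdd_mul ((hgsm.mono (hFle t)).aestronglyMeasurable) (Filter.Eventually.of_forall hgbd)
    have hRHSint : Integrable (Y t + (g * X (t + 1)
        - Set.indicator (A t) (fun _ => (1 : ℝ)))) μ := (hYint t).add (hgX.sub (hIndInt t))
    have h1 : Y (t + 1) ≤ᵐ[μ] Y t + (g * X (t + 1)
        - Set.indicator (A t) (fun _ => (1 : ℝ))) := by
      filter_upwards [hnonneg (t + 1)] with ω hX1
      simp only [Pi.add_apply, Pi.sub_apply, Pi.mul_apply]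
      by_cases hω : ω ∈ A t
      · have hXt : xmin < X t ω := hω t le_rfl
        have hXt1 : xmin ≤ X (t + 1) ω := hX1 (by
          push_cast
          exact Order.add_one_le_of_lt ((lt_hitting_iff hT t ω).2 hω))
        have e1 : stopX X xmin (t + 1) ω = X (t + 1) ω := by
          rw [stopX]; exact Set.piecewise_eq_of_mem _ _ _ hω
        have e2 : stopX X xmin t ω = X t ω := stopX_eq_of_mem hω
        simp only [hY, hg, e1, e2, Set.indicator_of_mem hω]
        have hb : 0 < X (t + 1) ω := hxmin.trans_le hXt1
        have ha : 0 < X t ω := hxmin.trans hXt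
        have hlog : Real.log (X (t + 1) ω / xmin) - Real.log (X t ω / xmin)
            = Real.log (X (t + 1) ω / X t ω) := by
          rw [Real.log_div hb.ne' hxmin.ne', Real.log_div ha.ne' hxmin.ne',
            Real.log_div hb.ne' ha.ne']
          ring
        have hle : Real.log (X (t + 1) ω / X t ω) ≤ X (t + 1) ω / X t ω - 1 :=
          Real.log_le_sub_one_of_pos (div_pos hb ha)
        rw [div_eq_inv_mul (X (t + 1) ω) (X t ω)] at hle hlog
        linarith
      · have e1 : stopX X xmin (t + 1) ω = stopX X xmin t ω := by
          rw [stopX]; exact Set.piecewise_eq_of_notMem _ _ _ hω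
        simp only [hY, hg, e1, Set.indicator_of_notMem hω]
        simp
    have hc1 : μ[Y (t + 1)|natSigma X t] ≤ᵐ[μ] μ[Y t + (g * X (t + 1)
        - Set.indicator (A t) (fun _ => (1 : ℝ)))|natSigma X t] :=
      condExp_mono (hYint (t + 1)) hRHSint h1
    have hc2 : μ[Y t + (g * X (t + 1) - Set.indicator (A t) (fun _ => (1 : ℝ)))|natSigma X t]
        =ᵐ[μ] fun ω => Y t ω + (g ω * (μ[X (t + 1)|natSigma X t]) ω
          - Set.indicator (A t) (fun _ => (1 : ℝ)) ω) := by
      refine (condExp_add (hYint t) (hgX.sub (hIndInt t)) _).trans ?_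
      have e2 : μ[Y t|natSigma X t] = Y t :=
        condExp_of_stronglyMeasurable (hFle t) (hYsm t) (hYint t)
      have e3 : μ[g * X (t + 1) - Set.indicator (A t) (fun _ => (1 : ℝ))|natSigma X t]
          =ᵐ[μ] fun ω => g ω * (μ[X (t + 1)|natSigma X t]) ω
            - Set.indicator (A t) (fun _ => (1 : ℝ)) ω := by
        refine (condExp_sub hgX (hIndInt t) _).trans ?_
        have e4 : μ[g * X (t + 1)|natSigma X t] =ᵐ[μ] g * μ[X (t + 1)|natSigma X t] :=
          condExp_mul_of_stronglyMeasurable_left hgsm hgX (hXint (t + 1))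
        have e5 : μ[Set.indicator (A t) (fun _ => (1 : ℝ))|natSigma X t]
            = Set.indicator (A t) (fun _ => (1 : ℝ)) :=
          condExp_of_stronglyMeasurable (hFle t)
            ((stronglyMeasurable_const (β := ℝ)).indicator measurableSet_aliveSet) (hIndInt t)
        rw [e5]
        filter_upwards [e4] with ω h4
        simp only [Pi.sub_apply, h4, Pi.mul_apply]
      rw [e2]
      filter_upwards [e3] with ω h3
      simp only [Pi.add_apply, h3]
    have hc3 : ∀ᵐ ω ∂μ, Y t ω + (g ω * (μ[X (t + 1)|natSigma X t]) ω
        - Set.indicator (A t) (fun _ => (1 : ℝ)) ω)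
          ≤ Y t ω - δ * Set.indicator (A t) (fun _ => (1 : ℝ)) ω := by
      filter_upwards [hdrift t] with ω hd
      by_cases hω : ω ∈ A t
      · have hXt : xmin < X t ω := hω t le_rfl
        have ha : 0 < X t ω := hxmin.trans hXt
        have hd' : δ * X t ω ≤ X t ω - (μ[X (t + 1)|natSigma X t]) ω :=
          hd ((lt_hitting_iff hT t ω).2 hω)
        rw [hg, Set.indicator_of_mem hω, Set.indicator_of_mem hω]
        have hmul : (X t ω)⁻¹ * (μ[X (t + 1)|natSigma X t]) ω ≤ 1 - δ := by
          have h5 : (μ[X (t + 1)|natSigma X t]) ω ≤ (1 - δ) * X t ω := by linarith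
          calc (X t ω)⁻¹ * (μ[X (t + 1)|natSigma X t]) ω
              ≤ (X t ω)⁻¹ * ((1 - δ) * X t ω) :=
                mul_le_mul_of_nonneg_left h5 (inv_nonneg.2 ha.le)
            _ = 1 - δ := by field_simp
        linarith
      · rw [hg, Set.indicator_of_notMem hω, Set.indicator_of_notMem hω]
        simp
    filter_upwards [hc1, hc2, hc3] with ω h1 h2 h3
    calc (μ[Y (t + 1)|natSigma X t]) ω ≤ _ := h1
      _ = _ := h2
      _ ≤ _ := h3
  set P : ℕ → Ω → ℝ := fun t => μ[Set.indicator (A t) (fun _ => (1 : ℝ))|sigma0 X] with hP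
  have htower : ∀ t : ℕ, ∀ᵐ ω ∂μ, (μ[Y (t + 1)|sigma0 X]) ω
      ≤ (μ[Y t|sigma0 X]) ω - δ * P t ω := by
    intro t
    have h0 : μ[Y t - δ • Set.indicator (A t) (fun _ => (1 : ℝ))|sigma0 X] =ᵐ[μ]
        fun ω => (μ[Y t|sigma0 X]) ω - δ * P t ω := by
      refine (condExp_sub (hYint t) ((hIndInt t).smul δ) _).trans ?_
      have hs := condExp_smul (m := sigma0 X) (μ := μ) δ (Set.indicator (A t) fun _ => (1 : ℝ))
      filter_upwards [hs] with ω h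
      simp only [Pi.sub_apply, h, Pi.smul_apply, smul_eq_mul, hP]
    have h1 : μ[Y (t + 1)|sigma0 X] =ᵐ[μ] μ[μ[Y (t + 1)|natSigma X t]|sigma0 X] :=
      (condExp_condExp_of_le (hm0F t) (hFle t)).symm
    have h2 : μ[μ[Y (t + 1)|natSigma X t]|sigma0 X] ≤ᵐ[μ]
        μ[Y t - δ • Set.indicator (A t) (fun _ => (1 : ℝ))|sigma0 X] := by
      refine condExp_mono integrable_condExp ((hYint t).sub ((hIndInt t).smul δ)) ?_
      filter_upwards [hstep t] with ω h
      simpa [Pi.sub_apply, Pi.smul_apply, smul_eq_mul] using h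
    filter_upwards [h1, h2, h0] with ω e1 e2 e0
    rw [e1]
    exact le_of_le_of_eq e2 e0
  have hY0eq : μ[Y 0|sigma0 X] = Y 0 := by
    have hX0 : Measurable[sigma0 X] (X 0) := Measurable.of_comap_le le_rfl
    have hYv : Y 0 = fun ω => Real.log (X 0 ω / xmin) := by
      funext ω
      simp only [hY]
      rw [stopX]
    have hsm0 : StronglyMeasurable[sigma0 X] (Y 0) := by
      rw [hYv]
      exact (Real.measurable_log.comp (hX0.div_const xmin)).stronglyMeasurable
    exact condExp_of_stronglyMeasurable hm0 hsm0 (hYint 0)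
  have hsum : ∀ N : ℕ, ∀ᵐ ω ∂μ, (μ[Y N|sigma0 X]) ω
      + δ * ∑ t ∈ Finset.range N, P t ω ≤ Y 0 ω := by
    intro N
    induction N with
    | zero =>
      rw [hY0eq]
      filter_upwards with ω
      simp
    | succ N ih =>
      filter_upwards [htower N, ih] with ω e1 e2
      rw [Finset.sum_range_succ, mul_add]
      linarith
  have hkey : ∀ N : ℕ, ∀ᵐ ω ∂μ, ∑ t ∈ Finset.range N, P t ω
      ≤ Real.log (X 0 ω / xmin) / δ := by
    intro N
    filter_upwards [hsum N, condExp_nonneg (m := sigma0 X) (hYnn N)] with ω h1 h2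
    have hY0v : Y 0 ω = Real.log (X 0 ω / xmin) := by
      simp only [hY]
      rw [stopX]
    simp only [Pi.zero_apply] at h2
    refine (le_div_iff₀ hδ).2 ?_
    rw [← hY0v, mul_comm]
    linarith
  have hPk : ∀ t : ℕ, P t =ᵐ[μ] fun ω => (condExpKernel μ (sigma0 X) ω (A t)).toReal :=
    fun t => (condExpKernel_ae_eq_condExp hm0 (hAmeas t)).symm
  have hall1 : ∀ᵐ ω ∂μ, ∀ N : ℕ, ∑ t ∈ Finset.range N, P t ω
      ≤ Real.log (X 0 ω / xmin) / δ := ae_all_iff.2 hkey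
  have hall2 : ∀ᵐ ω ∂μ, ∀ t : ℕ, P t ω = (condExpKernel μ (sigma0 X) ω (A t)).toReal :=
    ae_all_iff.2 hPk
  filter_upwards [hall1, hall2] with ω h1 h2
  calc ∫⁻ ω', (T ω' : ℝ≥0∞) ∂(condExpKernel μ (sigma0 X) ω)
      = ∑' t : ℕ, condExpKernel μ (sigma0 X) ω (A t) := by
        rw [lintegral_congr (coe_hitting_eq_tsum hT)]
        rw [lintegral_tsum fun t => (measurable_const.indicator (hAmeas t)).aemeasurable]
        exact tsum_congr fun t => lintegral_indicator_one (hAmeas t)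
    _ ≤ ENNReal.ofReal (Real.log (X 0 ω / xmin) / δ) := by
        rw [ENNReal.tsum_eq_iSup_nat]
        refine iSup_le fun N => ?_
        have hne : ∀ t ∈ Finset.range N, condExpKernel μ (sigma0 X) ω (A t) ≠ ∞ :=
          fun t _ => measure_ne_top _ _
        have hsne : ∑ t ∈ Finset.range N, condExpKernel μ (sigma0 X) ω (A t) ≠ ∞ := by
          rw [← lt_top_iff_ne_top]
          exact ENNReal.sum_lt_top.2 fun t ht => lt_top_iff_ne_top.2 (hne t ht)
        rw [← ENNReal.ofReal_toReal hsne]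
        refine ENNReal.ofReal_le_ofReal ?_
        rw [ENNReal.toReal_sum hne]
        calc ∑ t ∈ Finset.range N, (condExpKernel μ (sigma0 X) ω (A t)).toReal
            = ∑ t ∈ Finset.range N, P t ω := Finset.sum_congr rfl fun t _ => (h2 t).symm
          _ ≤ _ := h1 N
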